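/- Let F be a convex class of distribution functions on ℝ, S : F × ℝ → ℝ a proper scoring rule, and G ∈ F. If there exists F ∈ F with heavier tail than G (i.e., G <ₜ F), then for every ε > 0 there exists F_ε ∈ F that is not tail equivalent to G and satisfies |S̄(F_ε, G) − S̄(G, G)| ≤ ε. -/

import Mathlib

open MeasureTheory Filter
open scoped ENNReal

/-- The mixture `l • μ + (1-l) • ν` of two measures. -/
noncomputable def mix {O : Type*} [MeasurableSpace O] (μ ν : Measure O) (l : ℝ) : Measure O :=
  ENNReal.ofReal l • μ + ENNReal.ofReal (1 - l) • ν

/-- `S` is a proper scoring rule on the class `𝓕` (first argument: forecast,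
integration: with respect to the true distribution). -/
def ProperScoringRule {O : Type*} [MeasurableSpace O]
    (𝓕 : Set (Measure O)) (S : Measure O → O → ℝ) : Prop :=
  (∀ F ∈ 𝓕, ∀ G ∈ 𝓕, Integrable (S F) G) ∧
  (∀ F ∈ 𝓕, ∀ G ∈ 𝓕, ∫ y, S F y ∂F ≤ ∫ y, S G y ∂F)

/-- The cumulative distribution function of a measure on `ℝ`. -/
noncomputable def mcdf (μ : Measure ℝ) : ℝ → ℝ := fun x => (μ (Set.Iic x)).toReal

/-- The upper endpoint `sup {x | F x < 1}` of a distribution function, in `EReal`. -/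
noncomputable def upEnd (F : ℝ → ℝ) : EReal :=
  sSup ((fun x : ℝ => (x : EReal)) '' {x : ℝ | F x < 1})

/-- The filter of approach towards an (extended-real) upper endpoint. -/
noncomputable def endFilter (e : EReal) : Filter ℝ :=
  if e = ⊤ then atTop else nhdsWithin e.toReal (Set.Iio e.toReal)

/-- The strict tail order: `G` has strictly heavier tail than `F`. -/
def TailLT (F G : ℝ → ℝ) : Prop :=
  upEnd F < upEnd G ∨
    (upEnd F = upEnd G ∧
      Tendsto (fun x => (1 - F x) / (1 - G x)) (endFilter (upEnd G)) (nhds 0))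

/-- `F` and `G` are tail equivalent. -/
def TailEquiv (F G : ℝ → ℝ) : Prop :=
  upEnd F = upEnd G ∧ ∃ c : ℝ, 0 < c ∧
    Tendsto (fun x => (1 - F x) / (1 - G x)) (endFilter (upEnd G)) (nhds c)

/- ### Auxiliary lemmas -/

lemma mcdf_mono (μ : Measure ℝ) [IsFiniteMeasure μ] : Monotone (mcdf μ) := fun a b hab =>
  ENNReal.toReal_mono (measure_ne_top μ _) (measure_mono (Set.Iic_subset_Iic.2 hab))

lemma mcdf_le_one (μ : Measure ℝ) [IsProbabilityMeasure μ] (x : ℝ) : mcdf μ x ≤ 1 := by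
  have h := ENNReal.toReal_mono (ENNReal.one_ne_top) (prob_le_one (μ := μ) (s := Set.Iic x))
  simpa [mcdf] using h

lemma mcdf_mix (F G : Measure ℝ) [IsFiniteMeasure F] [IsFiniteMeasure G] {l : ℝ}
    (h0 : 0 ≤ l) (h1 : l ≤ 1) (x : ℝ) :
    mcdf (mix F G l) x = l * mcdf F x + (1 - l) * mcdf G x := by
  simp only [mcdf, mix, Measure.add_apply, Measure.smul_apply, smul_eq_mul]
  rw [ENNReal.toReal_add (ENNReal.mul_ne_top ENNReal.ofReal_ne_top (measure_ne_top _ _))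
      (ENNReal.mul_ne_top ENNReal.ofReal_ne_top (measure_ne_top _ _)),
    ENNReal.toReal_mul, ENNReal.toReal_mul,
    ENNReal.toReal_ofReal h0, ENNReal.toReal_ofReal (by linarith : (0:ℝ) ≤ 1 - l)]

lemma integral_mix {F G : Measure ℝ} {f : ℝ → ℝ} {l : ℝ} (h0 : 0 ≤ l) (h1 : l ≤ 1)
    (hf : Integrable f F) (hg : Integrable f G) :
    ∫ y, f y ∂(mix F G l) = l * ∫ y, f y ∂F + (1 - l) * ∫ y, f y ∂G := by
  rw [mix, integral_add_measure (hf.smul_measure ENNReal.ofReal_ne_top)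
      (hg.smul_measure ENNReal.ofReal_ne_top),
    integral_smul_measure, integral_smul_measure,
    ENNReal.toReal_ofReal h0, ENNReal.toReal_ofReal (by linarith : (0:ℝ) ≤ 1 - l)]
  simp [smul_eq_mul]

lemma lt_one_of_lt_upEnd {μ : Measure ℝ} [IsFiniteMeasure μ] {x : ℝ}
    (hx : (x : EReal) < upEnd (mcdf μ)) : mcdf μ x < 1 := by
  obtain ⟨y', hy', hxy⟩ := lt_sSup_iff.mp hx
  obtain ⟨y, hy, rfl⟩ := hy'
  have hxy' : x ≤ y := by
    have := hxy.le
    simp only [EReal.coe_le_coe_iff] at this ⊢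
    exact_mod_cast this
  exact lt_of_le_of_lt (mcdf_mono μ hxy') hy

lemma upEnd_ne_bot (μ : Measure ℝ) [IsProbabilityMeasure μ] : upEnd (mcdf μ) ≠ ⊥ := by
  have hx : ∃ x : ℝ, mcdf μ x < 1 := by
    by_contra h
    push_neg at h
    have h1 : ∀ x : ℝ, μ (Set.Iic x) = 1 := by
      intro x
      refine le_antisymm prob_le_one ?_
      have hx := h x
      rw [mcdf] at hx
      rw [← ENNReal.ofReal_one, ← ENNReal.ofReal_toReal (measure_ne_top μ (Set.Iic x))]
      exact ENNReal.ofReal_le_ofReal hx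
    have hanti : Antitone (fun n : ℕ => Set.Iic (-(n : ℝ))) := fun m n hmn =>
      Set.Iic_subset_Iic.2 (neg_le_neg (by exact_mod_cast hmn))
    have hmeas : ∀ n : ℕ, NullMeasurableSet (Set.Iic (-(n : ℝ))) μ := fun n =>
      measurableSet_Iic.nullMeasurableSet
    have hlim := tendsto_measure_iInter_atTop hmeas hanti ⟨0, measure_ne_top μ _⟩
    have hempty : (⋂ n : ℕ, Set.Iic (-(n : ℝ))) = ∅ := by
      ext x
      simp only [Set.mem_iInter, Set.mem_Iic, Set.mem_empty_iff_false, iff_false]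
      push_neg
      obtain ⟨n, hn⟩ := exists_nat_gt (-x)
      exact ⟨n, by linarith⟩
    rw [hempty] at hlim
    simp only [measure_empty] at hlim
    have h1' : Tendsto (fun _ : ℕ => (1 : ℝ≥0∞)) atTop (nhds 0) :=
      hlim.congr fun n => h1 (-(n : ℝ))
    exact zero_ne_one (tendsto_nhds_unique h1' tendsto_const_nhds)
  obtain ⟨x, hx⟩ := hx
  have : (x : EReal) ≤ upEnd (mcdf μ) := le_sSup ⟨x, hx, rfl⟩
  exact fun hb => absurd (hb ▸ this) (by simp)

instance endFilter_neBot (e : EReal) : (endFilter e).NeBot := by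
  rw [endFilter]
  split
  · infer_instance
  · infer_instance

lemma eventually_lt_upEnd {e : EReal} (he : e ≠ ⊥) :
    ∀ᶠ x : ℝ in endFilter e, (x : EReal) < e := by
  rw [endFilter]
  split
  · next h => exact Eventually.of_forall fun x => h ▸ EReal.coe_lt_top x
  · next h =>
    have hcoe : e = ((e.toReal : ℝ) : EReal) := (EReal.coe_toReal h he).symm
    have : ∀ x ∈ Set.Iio e.toReal, (x : EReal) < e := fun x hx => by
      rw [hcoe]; exact_mod_cast hx
    exact eventually_nhdsWithin_of_forall this

lemma upEnd_mix (F G : Measure ℝ) [IsProbabilityMeasure F] [IsProbabilityMeasure G]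
    {l : ℝ} (h0 : 0 < l) (h1 : l < 1) :
    upEnd (mcdf (mix F G l)) = max (upEnd (mcdf F)) (upEnd (mcdf G)) := by
  have hset : {x : ℝ | mcdf (mix F G l) x < 1} =
      {x : ℝ | mcdf F x < 1} ∪ {x : ℝ | mcdf G x < 1} := by
    ext x
    have hf := mcdf_le_one F x
    have hg := mcdf_le_one G x
    simp only [Set.mem_setOf_eq, Set.mem_union, mcdf_mix F G h0.le h1.le x]
    constructor
    · intro hlt
      by_contra hc
      push_neg at hc
      nlinarith [hc.1, hc.2]
    · rintro (hlt | hlt) <;> nlinarith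
  rw [upEnd, hset, Set.image_union, sSup_union]
  rfl

/-- No proper scoring rule is tail equivalent: a distribution which is not tail
equivalent to the truth can have an almost minimal expected score. -/
theorem proper_scoring_rule_not_tail_equivalent
    (𝓕 : Set (Measure ℝ)) (hprob : ∀ F ∈ 𝓕, IsProbabilityMeasure F)
    (hconv : ∀ F ∈ 𝓕, ∀ G ∈ 𝓕, ∀ l ∈ Set.Icc (0:ℝ) 1, mix F G l ∈ 𝓕)
    (S : Measure ℝ → ℝ → ℝ) (hS : ProperScoringRule 𝓕 S)
    (G : Measure ℝ) (hG : G ∈ 𝓕) (F : Measure ℝ) (hF : F ∈ 𝓕)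
    (hheavier : TailLT (mcdf G) (mcdf F)) :
    ∀ ε : ℝ, 0 < ε → ∃ Fε ∈ 𝓕, ¬ TailEquiv (mcdf Fε) (mcdf G) ∧
      |(∫ y, S Fε y ∂G) - ∫ y, S G y ∂G| ≤ ε := by
  intro ε hε
  haveI : IsProbabilityMeasure F := hprob F hF
  haveI : IsProbabilityMeasure G := hprob G hG
  set C : ℝ := (∫ y, S G y ∂F) - ∫ y, S F y ∂F with hC
  have hC0 : 0 ≤ C := sub_nonneg.2 (hS.2 F hF G hG)
  set l : ℝ := ε / (C + ε + 1) with hl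
  have hd : (0:ℝ) < C + ε + 1 := by linarith
  have hl0 : 0 < l := div_pos hε hd
  have hl1 : l < 1 := by rw [hl, div_lt_one hd]; linarith
  have hFε𝓕 : mix F G l ∈ 𝓕 := hconv F hF G hG l ⟨hl0.le, hl1.le⟩
  refine ⟨mix F G l, hFε𝓕, ?_, ?_⟩
  · rintro ⟨heq, c, hc, hten⟩
    rcases hheavier with hlt | ⟨he, hlim⟩
    · have hmx := upEnd_mix F G hl0 hl1
      rw [max_eq_left hlt.le] at hmx
      exact absurd (heq.symm.trans hmx) hlt.ne
    · have hbot : upEnd (mcdf F) ≠ ⊥ := upEnd_ne_bot F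
      have hev : ∀ᶠ x : ℝ in endFilter (upEnd (mcdf F)), (x : EReal) < upEnd (mcdf F) :=
        eventually_lt_upEnd hbot
      rw [he] at hten
      have h2 : Tendsto (fun x =>
          (((1 - mcdf (mix F G l) x) / (1 - mcdf G x) - (1 - l)) / l)
            * ((1 - mcdf G x) / (1 - mcdf F x)))
          (endFilter (upEnd (mcdf F))) (nhds (((c - (1 - l)) / l) * 0)) :=
        ((hten.sub_const (1 - l)).div_const l).mul hlim
      have heq1 : ∀ᶠ x : ℝ in endFilter (upEnd (mcdf F)),
          (((1 - mcdf (mix F G l) x) / (1 - mcdf G x) - (1 - l)) / l)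
            * ((1 - mcdf G x) / (1 - mcdf F x)) = 1 := by
        filter_upwards [hev] with x hx
        have hF1 : mcdf F x < 1 := lt_one_of_lt_upEnd hx
        have hG1 : mcdf G x < 1 := lt_one_of_lt_upEnd (by rw [he]; exact hx)
        have ha : (1 : ℝ) - mcdf F x ≠ 0 := by linarith
        have hb : (1 : ℝ) - mcdf G x ≠ 0 := by linarith
        rw [mcdf_mix F G hl0.le hl1.le x]
        field_simp
        ring
      have h3 : Tendsto (fun _ : ℝ => (1 : ℝ)) (endFilter (upEnd (mcdf F)))
          (nhds (((c - (1 - l)) / l) * 0)) :=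
        h2.congr' (heq1.mono fun x hx => hx)
      have h4 := tendsto_nhds_unique h3 (tendsto_const_nhds (x := (1:ℝ))
        (f := endFilter (upEnd (mcdf F))))
      simp at h4
  · have e1 : ∫ y, S (mix F G l) y ∂(mix F G l)
        = l * ∫ y, S (mix F G l) y ∂F + (1 - l) * ∫ y, S (mix F G l) y ∂G :=
      integral_mix hl0.le hl1.le (hS.1 (mix F G l) hFε𝓕 F hF) (hS.1 (mix F G l) hFε𝓕 G hG)
    have e2 : ∫ y, S G y ∂(mix F G l) = l * ∫ y, S G y ∂F + (1 - l) * ∫ y, S G y ∂G :=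
      integral_mix hl0.le hl1.le (hS.1 G hG F hF) (hS.1 G hG G hG)
    have p1 : ∫ y, S (mix F G l) y ∂(mix F G l) ≤ ∫ y, S G y ∂(mix F G l) :=
      hS.2 (mix F G l) hFε𝓕 G hG
    have p2 : ∫ y, S F y ∂F ≤ ∫ y, S (mix F G l) y ∂F := hS.2 F hF (mix F G l) hFε𝓕
    have p3 : ∫ y, S G y ∂G ≤ ∫ y, S (mix F G l) y ∂G := hS.2 G hG (mix F G l) hFε𝓕
    rw [abs_of_nonneg (by linarith)]
    have hml : l * (C + ε + 1) = ε := by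
      rw [hl]; field_simp
    have key : (1 - l) * ((∫ y, S (mix F G l) y ∂G) - ∫ y, S G y ∂G) ≤ l * C := by
      nlinarith [e1, e2, p1, p2, hl0.le]
    nlinarith [key, hml, hl0.le, hε.le]
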